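/- A graph G=(V,E) is prison-free if and only if the following holds: for every inclusion-wise maximal set F⊆V such that the induced subgraph G[F] is complete multipartite with at least 4 classes, and for every vertex v∈V∖F, the neighborhood N(v) intersects at most one class of F. -/

import Mathlib

namespace PrisonFreePaper

variable {V : Type*}

/-- The prison graph on 5 vertices: `K₅` minus the two edges `{4,2}` and `{4,3}`
(which share the vertex `4`).  Thus `{0,1,2,3}` is a 4-clique and the vertex `4`
is adjacent exactly to `0` and `1`. -/
def prison : SimpleGraph (Fin 5) where
  Adj a b := a ≠ b ∧ ¬((a = 4 ∧ (b = 2 ∨ b = 3)) ∨ (b = 4 ∧ (a = 2 ∨ a = 3)))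
  symm := by
    constructor
    rintro a b ⟨h1, h2⟩
    exact ⟨h1.symm, by tauto⟩
  loopless := by
    constructor
    rintro a ⟨h, _⟩
    exact h rfl

/-- `P` is a 5-vertex set inducing a subgraph of `G` isomorphic to the prison. -/
def InducesPrison (G : SimpleGraph V) (P : Set V) : Prop :=
  ∃ f : Fin 5 ↪ V, Set.range f = P ∧ ∀ a b, G.Adj (f a) (f b) ↔ prison.Adj a b

/-- `G` is prison-free: no 5-vertex set induces a prison. -/
def PrisonFree (G : SimpleGraph V) : Prop :=
  ¬ ∃ P : Set V, InducesPrison G P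

/-- `P` is the set of classes witnessing that the induced subgraph `G[F]` is
complete multipartite: the classes are nonempty, pairwise disjoint, their union
is `F`, and two vertices of `F` are adjacent iff they lie in different classes. -/
def IsCMP (G : SimpleGraph V) (F : Set V) (P : Set (Set V)) : Prop :=
  (∀ C ∈ P, C.Nonempty ∧ C ⊆ F) ∧
  (⋃₀ P = F) ∧
  (∀ C ∈ P, ∀ D ∈ P, C ≠ D → Disjoint C D) ∧
  (∀ u ∈ F, ∀ v ∈ F, (G.Adj u v ↔ ¬ ∃ C ∈ P, u ∈ C ∧ v ∈ C))

/-- The induced subgraph `G[F]` is complete multipartite. -/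
def CMP (G : SimpleGraph V) (F : Set V) : Prop := ∃ P, IsCMP G F P

/-- The induced subgraph `G[F]` is complete multipartite with at least `p` classes. -/
def CMPAtLeast (G : SimpleGraph V) (F : Set V) (p : ℕ) : Prop :=
  ∃ P, IsCMP G F P ∧ ∃ f : Fin p ↪ Set V, ∀ i, f i ∈ P

/-- `F ∈ cmd_p` of the induced subgraph of `G` on the ground set `W`:
`F` is an inclusion-wise maximal subset of `W` inducing a complete multipartite
graph with at least `p` classes. -/
def Cmd (G : SimpleGraph V) (W : Set V) (p : ℕ) (F : Set V) : Prop :=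
  F ⊆ W ∧ CMPAtLeast G F p ∧
    ∀ F', F' ⊆ W → F ⊆ F' → CMPAtLeast G F' p → F' = F

/-- The neighbourhood of `v` in `G` intersects at most one class of `P`. -/
def MeetsAtMostOneClass (G : SimpleGraph V) (P : Set (Set V)) (v : V) : Prop :=
  ∀ C ∈ P, ∀ D ∈ P, (∃ x ∈ C, G.Adj v x) → (∃ y ∈ D, G.Adj v y) → C = D

/-- The induced subgraph `G[X]`, viewed as a graph on the same vertex set
(only edges with both endpoints in `X` are kept). -/
def inducedOn (G : SimpleGraph V) (X : Set V) : SimpleGraph V where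
  Adj a b := G.Adj a b ∧ a ∈ X ∧ b ∈ X
  symm := by constructor; rintro a b ⟨h, ha, hb⟩; exact ⟨h.symm, hb, ha⟩
  loopless := by constructor; rintro a ⟨h, _⟩; exact h.ne rfl

/-- The set of edges of `G` with both endpoints in `X`, i.e. the edges of `G[X]`. -/
def edgesWithin (G : SimpleGraph V) (X : Set V) : Set (Sym2 V) :=
  (inducedOn G X).edgeSet

/-- `(G,k)` is a yes-instance of Prison-Free Edge Deletion. -/
def DeletionYes (G : SimpleGraph V) (k : ℕ) : Prop :=
  ∃ A : Set (Sym2 V), A ⊆ G.edgeSet ∧ A.Finite ∧ A.ncard ≤ k ∧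
    PrisonFree (G.deleteEdges A)

/-- `P` is a strict supergraph of a prison in `G`: a 5-vertex set whose induced
subgraph is `K₅` or `K₅` minus one edge (at most one non-adjacent pair). -/
def StrictSupPrison (G : SimpleGraph V) (P : Set V) : Prop :=
  P.ncard = 5 ∧ ∃ u v : V, ∀ x ∈ P, ∀ y ∈ P, x ≠ y → ¬ G.Adj x y →
    (x = u ∧ y = v) ∨ (x = v ∧ y = u)

/-- `P` is a supergraph of a prison in `G`: a 5-vertex set whose induced subgraph
contains a prison on `P` as a spanning subgraph, i.e. all non-adjacent pairs in `P`
are among two pairs sharing a common vertex. -/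
def SupPrison (G : SimpleGraph V) (P : Set V) : Prop :=
  P.ncard = 5 ∧ ∃ w u v : V, ∀ x ∈ P, ∀ y ∈ P, x ≠ y → ¬ G.Adj x y →
    (({x, y} : Set V) = {w, u} ∨ ({x, y} : Set V) = {w, v})

/-- Hypothesis (H1): every edge of `G` that does not have both endpoints in `S`
is contained in a strict supergraph of a prison in `G`. -/
def H1 (G : SimpleGraph V) (S : Set V) : Prop :=
  ∀ u v : V, G.Adj u v → ¬(u ∈ S ∧ v ∈ S) →
    ∃ P, StrictSupPrison G P ∧ u ∈ P ∧ v ∈ P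

/-- Hypothesis (H2): every 5-vertex set inducing a prison in `G` contains at least
two edges with both endpoints in `S`. -/
def H2 (G : SimpleGraph V) (S : Set V) : Prop :=
  ∀ P, InducesPrison G P →
    ∃ e₁ e₂ : Sym2 V, e₁ ≠ e₂ ∧ e₁ ∈ edgesWithin G (P ∩ S) ∧ e₂ ∈ edgesWithin G (P ∩ S)

/-- `B`: the edges of `G−S` lying in no triangle of `G−S`. -/
def BSet (G : SimpleGraph V) (S : Set V) : Set (Sym2 V) :=
  {e ∈ edgesWithin G Sᶜ | ¬ ∃ w ∈ Sᶜ, ∀ x ∈ e, G.Adj w x}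

/-- `B_e` for the edge `e = ab` of `G[S]`: the edges of `B` both of whose endpoints
are adjacent in `G` to both `a` and `b`. -/
def BOf (G : SimpleGraph V) (S : Set V) (a b : V) : Set (Sym2 V) :=
  {f ∈ BSet G S | ∀ x ∈ f, G.Adj x a ∧ G.Adj x b}

/-- `V(B_e)`: the set of endpoints of the edges of `B_e`. -/
def BVerts (G : SimpleGraph V) (S : Set V) (a b : V) : Set V :=
  {x | ∃ f ∈ BOf G S a b, x ∈ f}

/-- The graph `G ∪ A` obtained by adding the pairs in `A` as edges. -/
def addEdges (G : SimpleGraph V) (A : Set (Sym2 V)) : SimpleGraph V :=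
  G ⊔ SimpleGraph.fromEdgeSet A

/-- `A` is a prison-free completion set for `G`: a set of non-edges (unordered
pairs of distinct vertices not adjacent in `G`) whose addition makes `G` prison-free. -/
def CompletionSet (G : SimpleGraph V) (A : Set (Sym2 V)) : Prop :=
  (∀ e ∈ A, ¬ e.IsDiag) ∧ (∀ e ∈ A, e ∉ G.edgeSet) ∧ PrisonFree (addEdges G A)

/-- `A` is a minimal prison-free completion set for `G`. -/
def MinCompletionSet (G : SimpleGraph V) (A : Set (Sym2 V)) : Prop :=
  CompletionSet G A ∧ ∀ A' ⊂ A, ¬ CompletionSet G A'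

/-- `A` is a solution to the instance `(G,k)` of Prison-Free Edge Completion:
a prison-free completion set of size at most `k`. -/
def Solution (G : SimpleGraph V) (k : ℕ) (A : Set (Sym2 V)) : Prop :=
  CompletionSet G A ∧ A.Finite ∧ A.ncard ≤ k

/-- `A` is a minimal solution to `(G,k)`: a solution no proper subset of which is a
prison-free completion set. -/
def MinSolution (G : SimpleGraph V) (k : ℕ) (A : Set (Sym2 V)) : Prop :=
  Solution G k A ∧ ∀ A' ⊂ A, ¬ CompletionSet G A'

/-- `K` is a set of 4 vertices inducing a complete graph `K₄` in `G`. -/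
def IsK4 (G : SimpleGraph V) (K : Set V) : Prop :=
  K.ncard = 4 ∧ ∀ u ∈ K, ∀ v ∈ K, u ≠ v → G.Adj u v

/-- The modulator property of the set `S` (output of the sunflower-based
Lemma): for every prison `P` in `G` and every edge set `A ⊆ E(G)` with `|A| ≤ k`,
if deleting `A` from `G[S]` yields a prison-free graph then `A` contains an edge
of `G[P]`. -/
def GoodModulator (G : SimpleGraph V) (k : ℕ) (S : Set V) : Prop :=
  ∀ P : Set V, InducesPrison G P →
    ∀ A : Set (Sym2 V), A ⊆ G.edgeSet → A.Finite → A.ncard ≤ k →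
      PrisonFree ((inducedOn G S).deleteEdges A) →
      ∃ e ∈ A, e ∈ edgesWithin G P

/-- Hypothesis (H3): for every `F' ∈ cmd₃(G−S)` and every inclusion-wise maximal
set `F ⊇ F'` such that `G[F]` is complete multipartite, some vertex outside `F`
has neighbours in at least two classes of `F`. -/
def H3 (G : SimpleGraph V) (S : Set V) : Prop :=
  ∀ F', Cmd G Sᶜ 3 F' → ∀ F : Set V, F' ⊆ F → CMP G F →
    (∀ F'', F ⊆ F'' → CMP G F'' → F'' = F) →
    ∃ v ∉ F, ∃ P, IsCMP G F P ∧
      ∃ C ∈ P, ∃ D ∈ P, C ≠ D ∧ (∃ x ∈ C, G.Adj v x) ∧ ∃ y ∈ D, G.Adj v y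

/-- `F` is an inclusion-wise maximal subset of `W` inducing a complete
multipartite subgraph of `G`. -/
def MaxCMPon (G : SimpleGraph V) (W F : Set V) : Prop :=
  F ⊆ W ∧ CMP G F ∧ ∀ F'', F'' ⊆ W → F ⊆ F'' → CMP G F'' → F'' = F



/-! ### Auxiliary lemmas -/

section Aux
variable {G : SimpleGraph V} {F : Set V} {P : Set (Set V)}

lemma prison_of (G : SimpleGraph V) (a b c d v : V)
    (hab : G.Adj a b) (hac : G.Adj a c) (had : G.Adj a d) (hbc : G.Adj b c)
    (hbd : G.Adj b d) (hcd : G.Adj c d)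
    (hva : G.Adj v a) (hvb : G.Adj v b) (hvc : ¬ G.Adj v c) (hvd : ¬ G.Adj v d) :
    ∃ P, InducesPrison G P := by
  have hvc' : v ≠ c := by rintro rfl; exact hvd hcd
  have hvd' : v ≠ d := by rintro rfl; exact hvc hcd.symm
  have hba := hab.symm; have hca := hac.symm; have hda := had.symm
  have hcb := hbc.symm; have hdb := hbd.symm; have hdc := hcd.symm
  have hav := hva.symm; have hbv := hvb.symm
  have hcv : ¬ G.Adj c v := fun h => hvc h.symm
  have hdv : ¬ G.Adj d v := fun h => hvd h.symm
  have finj : Function.Injective (![a, b, c, d, v] : Fin 5 → V) := by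
    intro i j hij
    fin_cases i <;> fin_cases j <;> simp_all
  refine ⟨_, ⟨⟨![a, b, c, d, v], finj⟩, rfl, ?_⟩⟩
  intro i j
  fin_cases i <;> fin_cases j <;> simp_all [prison, SimpleGraph.irrefl]

namespace IsCMP

lemma mem_F (h : IsCMP G F P) {C : Set V} (hC : C ∈ P) {u : V} (hu : u ∈ C) : u ∈ F :=
  (h.1 C hC).2 hu

lemma class_unique (h : IsCMP G F P) {C D : Set V} (hC : C ∈ P) (hD : D ∈ P)
    {u : V} (huC : u ∈ C) (huD : u ∈ D) : C = D := by
  by_contra hne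
  exact (h.2.2.1 C hC D hD hne).ne_of_mem huC huD rfl

lemma exists_class (h : IsCMP G F P) {u : V} (hu : u ∈ F) : ∃ C ∈ P, u ∈ C := by
  rw [← h.2.1] at hu; exact hu

lemma not_adj (h : IsCMP G F P) {C : Set V} (hC : C ∈ P) {u w : V}
    (hu : u ∈ C) (hw : w ∈ C) : ¬ G.Adj u w := by
  have := (h.2.2.2 u (h.mem_F hC hu) w (h.mem_F hC hw)).1
  intro hadj; exact this hadj ⟨C, hC, hu, hw⟩

lemma adj (h : IsCMP G F P) {C D : Set V} (hC : C ∈ P) (hD : D ∈ P) (hne : C ≠ D)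
    {u w : V} (hu : u ∈ C) (hw : w ∈ D) : G.Adj u w := by
  rw [h.2.2.2 u (h.mem_F hC hu) w (h.mem_F hD hw)]
  rintro ⟨E, hE, huE, hwE⟩
  exact hne ((h.class_unique hC hE hu huE).trans (h.class_unique hE hD hwE hw))

end IsCMP

lemma isCMP_unique {P' : Set (Set V)} (h : IsCMP G F P) (h' : IsCMP G F P') : P = P' := by
  have key : ∀ (Q Q' : Set (Set V)), IsCMP G F Q → IsCMP G F Q' → Q ⊆ Q' := by
    intro Q Q' hQ hQ' C hC
    obtain ⟨⟨u, hu⟩, hCF⟩ := hQ.1 C hC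
    obtain ⟨C', hC', huC'⟩ := hQ'.exists_class (hQ.mem_F hC hu)
    have hsub1 : C ⊆ C' := by
      intro w hw
      rcases eq_or_ne w u with rfl | hne
      · exact huC'
      have hna : ¬ G.Adj u w := hQ.not_adj hC hu hw
      obtain ⟨D', hD', huD', hwD'⟩ :=
        not_not.1 (fun hcon => hna ((hQ'.2.2.2 u (hQ.mem_F hC hu) w (hQ.mem_F hC hw)).2 hcon))
      rwa [hQ'.class_unique hC' hD' huC' huD']
    have hsub2 : C' ⊆ C := by
      intro w hw
      rcases eq_or_ne w u with rfl | hne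
      · exact hu
      have hna : ¬ G.Adj u w := hQ'.not_adj hC' huC' hw
      obtain ⟨D, hD, huD, hwD⟩ :=
        not_not.1 (fun hcon => hna ((hQ.2.2.2 u (hQ.mem_F hC hu) w (hQ'.mem_F hC' hw)).2 hcon))
      rw [hQ.class_unique hC hD hu huD]; exact hwD
    rwa [hsub1.antisymm hsub2]
  exact (key P P' h h').antisymm (key P' P h' h)

open Classical in
lemma card_eq_le_one (f : Fin 4 ↪ Set V) (A : Set V) :
    (Finset.univ.filter (fun i : Fin 4 => f i = A)).card ≤ 1 := by
  refine Finset.card_le_one.2 ?_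
  intro i hi j hj
  simp only [Finset.mem_filter] at hi hj
  exact f.injective (hi.2.trans hj.2.symm)

lemma exists_two_avoid (f : Fin 4 ↪ Set V) (A B : Set V) :
    ∃ i j : Fin 4, i ≠ j ∧ f i ≠ A ∧ f i ≠ B ∧ f j ≠ A ∧ f j ≠ B := by
  classical
  set bad := Finset.univ.filter (fun i : Fin 4 => f i = A ∨ f i = B) with hbad
  have hbc : bad.card ≤ 2 := by
    have hsub : bad ⊆ (Finset.univ.filter (fun i : Fin 4 => f i = A)) ∪
        (Finset.univ.filter (fun i : Fin 4 => f i = B)) := by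
      intro i hi
      simp only [hbad, Finset.mem_filter, Finset.mem_union] at hi ⊢
      tauto
    calc bad.card ≤ _ := Finset.card_le_card hsub
      _ ≤ _ := Finset.card_union_le _ _
      _ ≤ 2 := add_le_add (card_eq_le_one f A) (card_eq_le_one f B)
  set good := Finset.univ.filter (fun i : Fin 4 => ¬(f i = A ∨ f i = B)) with hgood
  have hcard : bad.card + good.card = 4 := by
    rw [hbad, hgood, Finset.card_filter_add_card_filter_not]
    simp
  have h2 : 1 < good.card := by omega
  obtain ⟨i, hi, j, hj, hij⟩ := Finset.one_lt_card.1 h2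
  simp only [hgood, Finset.mem_filter, not_or] at hi hj
  exact ⟨i, j, hij, hi.2.1, hi.2.2, hj.2.1, hj.2.2⟩

lemma exists_one_avoid (f : Fin 4 ↪ Set V) (A B E : Set V) :
    ∃ i : Fin 4, f i ≠ A ∧ f i ≠ B ∧ f i ≠ E := by
  classical
  set bad := Finset.univ.filter (fun i : Fin 4 => f i = A ∨ f i = B ∨ f i = E) with hbad
  have hbc : bad.card ≤ 3 := by
    have hsub : bad ⊆ (Finset.univ.filter (fun i : Fin 4 => f i = A)) ∪
        ((Finset.univ.filter (fun i : Fin 4 => f i = B)) ∪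
         (Finset.univ.filter (fun i : Fin 4 => f i = E))) := by
      intro i hi
      simp only [hbad, Finset.mem_filter, Finset.mem_union] at hi ⊢
      tauto
    calc bad.card ≤ _ := Finset.card_le_card hsub
      _ ≤ _ := Finset.card_union_le _ _
      _ ≤ _ := add_le_add le_rfl (Finset.card_union_le _ _)
      _ ≤ 3 := by
          have h1 := card_eq_le_one f A; have h2 := card_eq_le_one f B
          have h3 := card_eq_le_one f E; omega
  set good := Finset.univ.filter (fun i : Fin 4 => ¬(f i = A ∨ f i = B ∨ f i = E)) with hgood
  have hcard : bad.card + good.card = 4 := by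
    rw [hbad, hgood, Finset.card_filter_add_card_filter_not]
    simp
  have h1 : 0 < good.card := by omega
  obtain ⟨i, hi⟩ := Finset.card_pos.1 h1
  simp only [hgood, Finset.mem_filter, not_or] at hi
  exact ⟨i, hi.2.1, hi.2.2.1, hi.2.2.2⟩

/-- Inner case of the two-nonneighbour-classes argument: the class of the
non-neighbour `z` coincides with the class `C` of the neighbour `x`. -/
lemma innerL (hPF : PrisonFree G) (h : IsCMP G F P) (f4 : Fin 4 ↪ Set V)
    (hf4 : ∀ i, f4 i ∈ P) {C D Cw : Set V} {x y z w v : V}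
    (hC : C ∈ P) (hD : D ∈ P) (hCwP : Cw ∈ P)
    (hCD : C ≠ D) (hCwC : Cw ≠ C)
    (hx : x ∈ C) (hy : y ∈ D) (hz : z ∈ C) (hw : w ∈ Cw)
    (hvx : G.Adj v x) (hvy : G.Adj v y) (hvz : ¬ G.Adj v z) (hvw : ¬ G.Adj v w) :
    False := by
  by_cases hDCw : D = Cw
  · subst hDCw
    obtain ⟨i, j, hij, hiC, hiD, hjC, hjD⟩ := exists_two_avoid f4 C D
    obtain ⟨p, hp⟩ := (h.1 _ (hf4 i)).1
    obtain ⟨q, hq⟩ := (h.1 _ (hf4 j)).1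
    have hPQ : f4 i ≠ f4 j := fun hc => hij (f4.injective hc)
    by_cases hvp : G.Adj v p <;> by_cases hvq : G.Adj v q
    · exact hPF (prison_of G p q z w v
        (h.adj (hf4 i) (hf4 j) hPQ hp hq) (h.adj (hf4 i) hC hiC hp hz)
        (h.adj (hf4 i) hD hiD hp hw) (h.adj (hf4 j) hC hjC hq hz)
        (h.adj (hf4 j) hD hjD hq hw) (h.adj hC hD hCD hz hw)
        hvp hvq hvz hvw)
    · exact hPF (prison_of G x p w q v
        (h.adj hC (hf4 i) (Ne.symm hiC) hx hp) (h.adj hC hD hCD hx hw)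
        (h.adj hC (hf4 j) (Ne.symm hjC) hx hq) (h.adj (hf4 i) hD hiD hp hw)
        (h.adj (hf4 i) (hf4 j) hPQ hp hq) (h.adj hD (hf4 j) (Ne.symm hjD) hw hq)
        hvx hvp hvw hvq)
    · exact hPF (prison_of G x q w p v
        (h.adj hC (hf4 j) (Ne.symm hjC) hx hq) (h.adj hC hD hCD hx hw)
        (h.adj hC (hf4 i) (Ne.symm hiC) hx hp) (h.adj (hf4 j) hD hjD hq hw)
        (h.adj (hf4 j) (hf4 i) hPQ.symm hq hp) (h.adj hD (hf4 i) (Ne.symm hiD) hw hp)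
        hvx hvq hvw hvp)
    · exact hPF (prison_of G x y p q v
        (h.adj hC hD hCD hx hy) (h.adj hC (hf4 i) (Ne.symm hiC) hx hp)
        (h.adj hC (hf4 j) (Ne.symm hjC) hx hq) (h.adj hD (hf4 i) (Ne.symm hiD) hy hp)
        (h.adj hD (hf4 j) (Ne.symm hjD) hy hq) (h.adj (hf4 i) (hf4 j) hPQ hp hq)
        hvx hvy hvp hvq)
  · obtain ⟨i, hiC, hiD, hiCw⟩ := exists_one_avoid f4 C D Cw
    obtain ⟨p, hp⟩ := (h.1 _ (hf4 i)).1
    by_cases hvp : G.Adj v p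
    · exact hPF (prison_of G y p z w v
        (h.adj hD (hf4 i) (Ne.symm hiD) hy hp) (h.adj hD hC (Ne.symm hCD) hy hz)
        (h.adj hD hCwP hDCw hy hw) (h.adj (hf4 i) hC hiC hp hz)
        (h.adj (hf4 i) hCwP hiCw hp hw) (h.adj hC hCwP (Ne.symm hCwC) hz hw)
        hvy hvp hvz hvw)
    · exact hPF (prison_of G x y w p v
        (h.adj hC hD hCD hx hy) (h.adj hC hCwP (Ne.symm hCwC) hx hw)
        (h.adj hC (hf4 i) (Ne.symm hiC) hx hp) (h.adj hD hCwP hDCw hy hw)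
        (h.adj hD (hf4 i) (Ne.symm hiD) hy hp) (h.adj hCwP (hf4 i) (Ne.symm hiCw) hw hp)
        hvx hvy hvw hvp)

/-- If `v` has neighbours in two distinct classes, all its non-neighbours in `F`
lie in a single class. -/
lemma claim1 (hPF : PrisonFree G) (h : IsCMP G F P) (f4 : Fin 4 ↪ Set V)
    (hf4 : ∀ i, f4 i ∈ P) {C D Cz Cw : Set V} {x y z w v : V}
    (hC : C ∈ P) (hD : D ∈ P) (hCzP : Cz ∈ P) (hCwP : Cw ∈ P)
    (hCD : C ≠ D)
    (hx : x ∈ C) (hy : y ∈ D) (hz : z ∈ Cz) (hw : w ∈ Cw)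
    (hvx : G.Adj v x) (hvy : G.Adj v y) (hvz : ¬ G.Adj v z) (hvw : ¬ G.Adj v w) :
    Cz = Cw := by
  by_contra hne
  by_cases h1 : C = Cz
  · subst h1
    exact innerL hPF h f4 hf4 hC hD hCwP hCD (fun hc => hne hc.symm) hx hy hz hw hvx hvy hvz hvw
  by_cases h2 : C = Cw
  · subst h2
    exact innerL hPF h f4 hf4 hC hD hCzP hCD (fun hc => hne hc) hx hy hw hz hvx hvy hvw hvz
  by_cases h3 : D = Cz
  · subst h3
    exact innerL hPF h f4 hf4 hD hC hCwP (Ne.symm hCD) (fun hc => hne hc.symm)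
      hy hx hz hw hvy hvx hvz hvw
  by_cases h4 : D = Cw
  · subst h4
    exact innerL hPF h f4 hf4 hD hC hCzP (Ne.symm hCD) (fun hc => hne hc)
      hy hx hw hz hvy hvx hvw hvz
  · exact hPF (prison_of G x y z w v
      (h.adj hC hD hCD hx hy) (h.adj hC hCzP (fun hc => h1 hc) hx hz)
      (h.adj hC hCwP (fun hc => h2 hc) hx hw) (h.adj hD hCzP (fun hc => h3 hc) hy hz)
      (h.adj hD hCwP (fun hc => h4 hc) hy hw) (h.adj hCzP hCwP hne hz hw)
      hvx hvy hvz hvw)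

/-- If `v` is adjacent to everything outside the class `Cz`, it cannot be adjacent
to a vertex of `Cz` while being non-adjacent to another one. -/
lemma claim2 (hPF : PrisonFree G) (h : IsCMP G F P) (f4 : Fin 4 ↪ Set V)
    (hf4 : ∀ i, f4 i ∈ P) {Cz : Set V} {z x' v : V}
    (hCzP : Cz ∈ P) (hz : z ∈ Cz) (hvz : ¬ G.Adj v z) (hx' : x' ∈ Cz) (hvx' : G.Adj v x')
    (hout : ∀ E ∈ P, E ≠ Cz → ∀ u ∈ E, G.Adj v u) :
    False := by
  obtain ⟨i, j, hij, hiCz, -, hjCz, -⟩ := exists_two_avoid f4 Cz Cz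
  obtain ⟨p, hp⟩ := (h.1 _ (hf4 i)).1
  obtain ⟨q, hq⟩ := (h.1 _ (hf4 j)).1
  have hPQ : f4 i ≠ f4 j := fun hc => hij (f4.injective hc)
  have hvp : G.Adj v p := hout _ (hf4 i) hiCz p hp
  have hvq : G.Adj v q := hout _ (hf4 j) hjCz q hq
  exact hPF (prison_of G p q v x' z
    (h.adj (hf4 i) (hf4 j) hPQ hp hq) hvp.symm
    (h.adj (hf4 i) hCzP hiCz hp hx') hvq.symm
    (h.adj (hf4 j) hCzP hjCz hq hx') hvx'
    (h.adj hCzP (hf4 i) (Ne.symm hiCz) hz hp)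
    (h.adj hCzP (hf4 j) (Ne.symm hjCz) hz hq)
    (fun hc => hvz hc.symm) (h.not_adj hCzP hz hx'))

end Aux

/-- A graph `G` is prison-free iff for every inclusion-wise maximal
set `F` such that `G[F]` is complete multipartite with at least 4 classes and every
vertex `v ∉ F`, the neighbourhood of `v` intersects at most one class of `F`. -/
theorem prisonFree_iff_cmd4_structure {V : Type*} [Fintype V] (G : SimpleGraph V) :
    PrisonFree G ↔
      ∀ F : Set V, Cmd G Set.univ 4 F → ∀ v ∉ F, ∀ P : Set (Set V),
        IsCMP G F P → MeetsAtMostOneClass G P v := by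
  classical
  constructor
  · -- forward direction
    intro hPF F hCmd v hvF P hP
    obtain ⟨hFuniv, ⟨P', hP', f4, hf4'⟩, hmax⟩ := hCmd
    have hf4 : ∀ i, f4 i ∈ P := by rw [isCMP_unique hP hP']; exact hf4'
    intro C hC D hD hxex hyex
    by_contra hCD
    obtain ⟨x, hxC, hvx⟩ := hxex
    obtain ⟨y, hyD, hvy⟩ := hyex
    have hvE : ∀ E ∈ P, v ∉ E := fun E hE hc => hvF ((hP.1 E hE).2 hc)
    have hins : CMPAtLeast G (insert v F) 4 := by
      by_cases hall : ∀ u ∈ F, G.Adj v u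
      · -- v is adjacent to everything in F : add {v} as a new class
        have main_vF : ∀ w ∈ F, (G.Adj v w ↔
            ¬ ∃ E ∈ insert ({v} : Set V) P, v ∈ E ∧ w ∈ E) := by
          intro w hw
          constructor
          · rintro - ⟨E, hE, h1, h2⟩
            rcases Set.mem_insert_iff.1 hE with heq | hE
            · exact hvF ((Set.mem_singleton_iff.1 (heq ▸ h2)) ▸ hw)
            · exact hvE E hE h1
          · intro _; exact hall w hw
        refine ⟨insert {v} P, ⟨?_, ?_, ?_, ?_⟩, f4,
          fun i => Set.mem_insert_iff.2 (Or.inr (hf4 i))⟩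
        · intro E hE
          rcases Set.mem_insert_iff.1 hE with heq | hE
          · exact heq ▸ ⟨⟨v, rfl⟩, Set.singleton_subset_iff.2 (Set.mem_insert _ _)⟩
          · exact ⟨(hP.1 E hE).1, (hP.1 E hE).2.trans (Set.subset_insert _ _)⟩
        · rw [Set.sUnion_insert, hP.2.1, Set.singleton_union]
        · intro E1 h1 E2 h2 hne
          rcases Set.mem_insert_iff.1 h1 with heq1 | h1 <;>
            rcases Set.mem_insert_iff.1 h2 with heq2 | h2
          · exact absurd (heq1.trans heq2.symm) hne
          · exact heq1 ▸ Set.disjoint_singleton_left.2 (hvE E2 h2)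
          · exact heq2 ▸ (Set.disjoint_singleton_left.2 (hvE E1 h1)).symm
          · exact hP.2.2.1 E1 h1 E2 h2 hne
        · have main_vv : G.Adj v v ↔
              ¬ ∃ E ∈ insert ({v} : Set V) P, v ∈ E ∧ v ∈ E := by
            constructor
            · intro had; exact (G.irrefl had).elim
            · intro hne; exact (hne ⟨{v}, Set.mem_insert _ _, rfl, rfl⟩).elim
          have main_FF : ∀ u ∈ F, ∀ w ∈ F, (G.Adj u w ↔
              ¬ ∃ E ∈ insert ({v} : Set V) P, u ∈ E ∧ w ∈ E) := by
            intro u hu w hw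
            rw [hP.2.2.2 u hu w hw]
            refine not_congr ⟨?_, ?_⟩
            · rintro ⟨E, hE, h1, h2⟩
              exact ⟨E, Set.mem_insert_iff.2 (Or.inr hE), h1, h2⟩
            · rintro ⟨E, hE, h1, h2⟩
              rcases Set.mem_insert_iff.1 hE with heq | hE
              · exact absurd ((Set.mem_singleton_iff.1 (heq ▸ h1)) ▸ hu) hvF
              · exact ⟨E, hE, h1, h2⟩
          intro u hu w hw
          rcases Set.mem_insert_iff.1 hu with hequ | hu <;>
            rcases Set.mem_insert_iff.1 hw with heqw | hw
          · rw [hequ, heqw]; exact main_vv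
          · rw [hequ]; exact main_vF w hw
          · rw [heqw]
            rw [G.adj_comm]
            refine (main_vF u hu).trans (not_congr ?_)
            constructor
            · rintro ⟨E, hE, h1, h2⟩; exact ⟨E, hE, h2, h1⟩
            · rintro ⟨E, hE, h1, h2⟩; exact ⟨E, hE, h2, h1⟩
          · exact main_FF u hu w hw
      · -- v has a non-neighbour z in F
        push_neg at hall
        obtain ⟨z, hzF, hvz⟩ := hall
        obtain ⟨Cz, hCzP, hzCz⟩ := hP.exists_class hzF
        have hout : ∀ E ∈ P, E ≠ Cz → ∀ u ∈ E, G.Adj v u := by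
          intro E hE hne u hu
          by_contra hnadj
          exact hne (claim1 hPF hP f4 hf4 hC hD hCzP hE hCD hxC hyD hzCz hu
            hvx hvy hvz hnadj).symm
        have hin : ∀ u ∈ Cz, ¬ G.Adj v u := by
          intro u hu hadj
          exact claim2 hPF hP f4 hf4 hCzP hzCz hvz hu hadj hout
        set Pn : Set (Set V) := insert (insert v Cz) (P \ {Cz}) with hPndef
        have main_vF : ∀ w ∈ F, (G.Adj v w ↔ ¬ ∃ E ∈ Pn, v ∈ E ∧ w ∈ E) := by
          intro w hw
          obtain ⟨Cw', hCw'P, hwCw'⟩ := hP.exists_class hw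
          by_cases hCzw : Cw' = Cz
          · constructor
            · intro had; exact (hin w (hCzw ▸ hwCw') had).elim
            · intro hne
              exact (hne ⟨insert v Cz, Set.mem_insert _ _, Set.mem_insert _ _,
                Set.mem_insert_of_mem _ (hCzw ▸ hwCw')⟩).elim
          · constructor
            · rintro - ⟨E, hE, h1, h2⟩
              rcases Set.mem_insert_iff.1 hE with heq | hE
              · rcases Set.mem_insert_iff.1 (heq ▸ h2) with heq2 | h2'
                · exact hvF (heq2 ▸ hw)
                · exact hCzw (hP.class_unique hCw'P hCzP hwCw' h2')
              · exact hvE E hE.1 h1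
            · intro _; exact hout Cw' hCw'P hCzw w hwCw'
        have main_vv : G.Adj v v ↔ ¬ ∃ E ∈ Pn, v ∈ E ∧ v ∈ E := by
          constructor
          · intro had; exact (G.irrefl had).elim
          · intro hne
            exact (hne ⟨insert v Cz, Set.mem_insert _ _, Set.mem_insert _ _,
              Set.mem_insert _ _⟩).elim
        have main_FF : ∀ u ∈ F, ∀ w ∈ F, (G.Adj u w ↔ ¬ ∃ E ∈ Pn, u ∈ E ∧ w ∈ E) := by
          intro u hu w hw
          rw [hP.2.2.2 u hu w hw]
          refine not_congr ⟨?_, ?_⟩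
          · rintro ⟨E, hE, h1, h2⟩
            by_cases hECz : E = Cz
            · exact ⟨insert v Cz, Set.mem_insert _ _,
                Set.mem_insert_of_mem _ (hECz ▸ h1), Set.mem_insert_of_mem _ (hECz ▸ h2)⟩
            · exact ⟨E, Set.mem_insert_of_mem _ ⟨hE, hECz⟩, h1, h2⟩
          · rintro ⟨E, hE, h1, h2⟩
            rcases Set.mem_insert_iff.1 hE with heq | hE
            · have h1' : u ∈ Cz := by
                rcases Set.mem_insert_iff.1 (heq ▸ h1) with heq1 | h
                · exact (hvF (heq1 ▸ hu)).elim
                · exact h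
              have h2' : w ∈ Cz := by
                rcases Set.mem_insert_iff.1 (heq ▸ h2) with heq2 | h
                · exact (hvF (heq2 ▸ hw)).elim
                · exact h
              exact ⟨Cz, hCzP, h1', h2'⟩
            · exact ⟨E, hE.1, h1, h2⟩
        refine ⟨Pn, ⟨?_, ?_, ?_, ?_⟩,
          ⟨fun i => if f4 i = Cz then insert v Cz else f4 i, ?_⟩, ?_⟩
        · intro E hE
          rcases Set.mem_insert_iff.1 hE with heq | hE
          · subst heq
            refine ⟨⟨v, Set.mem_insert _ _⟩, ?_⟩
            intro u hu
            rcases Set.mem_insert_iff.1 hu with hequ | hu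
            · exact hequ ▸ Set.mem_insert _ _
            · exact Set.mem_insert_of_mem _ ((hP.1 Cz hCzP).2 hu)
          · exact ⟨(hP.1 E hE.1).1, ((hP.1 E hE.1).2).trans (Set.subset_insert _ _)⟩
        · rw [hPndef, Set.sUnion_insert]
          ext u
          simp only [Set.mem_union, Set.mem_insert_iff, Set.mem_sUnion, Set.mem_diff,
            Set.mem_singleton_iff]
          constructor
          · rintro ((rfl | hu) | ⟨E, ⟨hE, -⟩, hu⟩)
            · exact Or.inl rfl
            · exact Or.inr ((hP.1 Cz hCzP).2 hu)
            · exact Or.inr ((hP.1 E hE).2 hu)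
          · rintro (rfl | hu)
            · exact Or.inl (Or.inl rfl)
            · obtain ⟨E, hE, huE⟩ := hP.exists_class hu
              by_cases hECz : E = Cz
              · exact Or.inl (Or.inr (hECz ▸ huE))
              · exact Or.inr ⟨E, ⟨hE, hECz⟩, huE⟩
        · have hdisj : ∀ E ∈ P \ ({Cz} : Set (Set V)), Disjoint (insert v Cz) E := by
            intro E hE
            refine Set.disjoint_left.2 ?_
            intro t ht htE
            rcases Set.mem_insert_iff.1 ht with heq | ht
            · exact hvE E hE.1 (heq ▸ htE)
            · exact (hP.2.2.1 Cz hCzP E hE.1 (Ne.symm hE.2)).ne_of_mem ht htE rfl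
          intro E1 h1 E2 h2 hne
          rcases Set.mem_insert_iff.1 h1 with heq1 | h1 <;>
            rcases Set.mem_insert_iff.1 h2 with heq2 | h2
          · exact absurd (heq1.trans heq2.symm) hne
          · exact heq1 ▸ hdisj E2 h2
          · exact heq2 ▸ (hdisj E1 h1).symm
          · exact hP.2.2.1 E1 h1.1 E2 h2.1 hne
        · intro u hu w hw
          rcases Set.mem_insert_iff.1 hu with hequ | hu <;>
            rcases Set.mem_insert_iff.1 hw with heqw | hw
          · rw [hequ, heqw]; exact main_vv
          · rw [hequ]; exact main_vF w hw
          · rw [heqw]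
            rw [G.adj_comm]
            refine (main_vF u hu).trans (not_congr ?_)
            constructor
            · rintro ⟨E, hE, h1, h2⟩; exact ⟨E, hE, h2, h1⟩
            · rintro ⟨E, hE, h1, h2⟩; exact ⟨E, hE, h2, h1⟩
          · exact main_FF u hu w hw
        · -- injectivity of the modified embedding
          intro i j hij
          have hij' : (if f4 i = Cz then insert v Cz else f4 i) =
              (if f4 j = Cz then insert v Cz else f4 j) := hij
          by_cases hi : f4 i = Cz <;> by_cases hj : f4 j = Cz
          · exact f4.injective (hi.trans hj.symm)
          · rw [if_pos hi, if_neg hj] at hij'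
            exact absurd (by rw [← hij']; exact Set.mem_insert v Cz) (hvE _ (hf4 j))
          · rw [if_neg hi, if_pos hj] at hij'
            exact absurd (by rw [hij']; exact Set.mem_insert v Cz) (hvE _ (hf4 i))
          · rw [if_neg hi, if_neg hj] at hij'
            exact f4.injective hij'
        · intro i
          show (if f4 i = Cz then insert v Cz else f4 i) ∈ Pn
          by_cases hi : f4 i = Cz
          · rw [if_pos hi]; exact Set.mem_insert _ _
          · rw [if_neg hi]; exact Set.mem_insert_of_mem _ ⟨hf4 i, hi⟩
    have hfe := hmax (insert v F) (Set.subset_univ _) (Set.subset_insert _ _) hins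
    exact hvF (hfe ▸ Set.mem_insert v F)
  · -- backward direction
    intro hyp hcon
    obtain ⟨Pr, f, hrange, hiso⟩ := hcon
    have hab : G.Adj (f 0) (f 1) := (hiso 0 1).2 ⟨by decide, by decide⟩
    have hac : G.Adj (f 0) (f 2) := (hiso 0 2).2 ⟨by decide, by decide⟩
    have had : G.Adj (f 0) (f 3) := (hiso 0 3).2 ⟨by decide, by decide⟩
    have hbc : G.Adj (f 1) (f 2) := (hiso 1 2).2 ⟨by decide, by decide⟩
    have hbd : G.Adj (f 1) (f 3) := (hiso 1 3).2 ⟨by decide, by decide⟩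
    have hcd : G.Adj (f 2) (f 3) := (hiso 2 3).2 ⟨by decide, by decide⟩
    have hva : G.Adj (f 4) (f 0) := (hiso 4 0).2 ⟨by decide, by decide⟩
    have hvb : G.Adj (f 4) (f 1) := (hiso 4 1).2 ⟨by decide, by decide⟩
    have hvc : ¬ G.Adj (f 4) (f 2) := fun h =>
      ((hiso 4 2).1 h).2 (Or.inl ⟨rfl, Or.inl rfl⟩)
    have hvd : ¬ G.Adj (f 4) (f 3) := fun h =>
      ((hiso 4 3).1 h).2 (Or.inl ⟨rfl, Or.inr rfl⟩)
    set K : Set V := {f 0, f 1, f 2, f 3} with hKdef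
    have hK : ∀ u ∈ K, ∀ w ∈ K, u ≠ w → G.Adj u w := by
      have hba := hab.symm; have hca := hac.symm; have hda := had.symm
      have hcb := hbc.symm; have hdb := hbd.symm; have hdc := hcd.symm
      intro u hu w hw hne
      simp only [hKdef, Set.mem_insert_iff, Set.mem_singleton_iff] at hu hw
      rcases hu with rfl | rfl | rfl | rfl <;> rcases hw with rfl | rfl | rfl | rfl <;>
        first | exact absurd rfl hne | assumption
    have hKcmp : IsCMP G K ((fun u => ({u} : Set V)) '' K) := by
      refine ⟨?_, ?_, ?_, ?_⟩
      · rintro C ⟨u, hu, rfl⟩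
        exact ⟨⟨u, rfl⟩, Set.singleton_subset_iff.2 hu⟩
      · ext t
        constructor
        · rintro ⟨C, ⟨u, hu, rfl⟩, ht⟩
          exact (Set.mem_singleton_iff.1 ht) ▸ hu
        · intro ht
          exact ⟨{t}, ⟨t, ht, rfl⟩, rfl⟩
      · rintro C ⟨u, hu, rfl⟩ D ⟨w, hw, rfl⟩ hne
        refine Set.disjoint_singleton.2 ?_
        intro hc
        exact hne (by rw [hc])
      · intro u hu w hw
        constructor
        · intro hadj
          rintro ⟨C, ⟨t, ht, rfl⟩, h1, h2⟩
          rw [Set.mem_singleton_iff] at h1 h2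
          exact (G.ne_of_adj hadj) (h1.trans h2.symm)
        · intro hne
          refine hK u hu w hw ?_
          intro hc
          exact hne ⟨{u}, ⟨u, hu, rfl⟩, rfl, Set.mem_singleton_iff.2 hc.symm⟩
    have hmemK : ∀ i : Fin 4, f ⟨i.val, by omega⟩ ∈ K := by
      intro i
      fin_cases i
      · exact Set.mem_insert _ _
      · exact Set.mem_insert_of_mem _ (Set.mem_insert _ _)
      · exact Set.mem_insert_of_mem _ (Set.mem_insert_of_mem _ (Set.mem_insert _ _))
      · exact Set.mem_insert_of_mem _ (Set.mem_insert_of_mem _ (Set.mem_insert_of_mem _ rfl))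
    have hKat : CMPAtLeast G K 4 := by
      refine ⟨(fun u => ({u} : Set V)) '' K, hKcmp,
        ⟨fun i => {f ⟨i.val, by omega⟩}, ?_⟩, ?_⟩
      · intro i j hij
        have h1 := f.injective (Set.singleton_injective hij)
        have h2 : i.val = j.val := by injection h1
        exact Fin.ext h2
      · intro i
        exact ⟨f ⟨i.val, by omega⟩, hmemK i, rfl⟩
    -- extend K to a maximal CMP-at-least-4 set
    set 𝒮 : Set (Set V) := {F | K ⊆ F ∧ CMPAtLeast G F 4} with h𝒮def
    have hfin : 𝒮.Finite := Set.toFinite _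
    have hne𝒮 : 𝒮.Nonempty := ⟨K, subset_rfl, hKat⟩
    obtain ⟨F, hF𝒮, hFmax⟩ := Set.Finite.exists_maximalFor id 𝒮 hfin hne𝒮
    have hCmdF : Cmd G Set.univ 4 F := by
      refine ⟨Set.subset_univ _, hF𝒮.2, ?_⟩
      intro F' _ hFF' hF'cmp
      exact (hFmax ⟨hF𝒮.1.trans hFF', hF'cmp⟩ hFF').antisymm hFF'
    obtain ⟨Pf, hPf, -⟩ := hF𝒮.2
    have haF : f 0 ∈ F := hF𝒮.1 (Set.mem_insert _ _)
    have hbF : f 1 ∈ F := hF𝒮.1 (Set.mem_insert_of_mem _ (Set.mem_insert _ _))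
    have hcF : f 2 ∈ F :=
      hF𝒮.1 (Set.mem_insert_of_mem _ (Set.mem_insert_of_mem _ (Set.mem_insert _ _)))
    have hdF : f 3 ∈ F :=
      hF𝒮.1 (Set.mem_insert_of_mem _ (Set.mem_insert_of_mem _ (Set.mem_insert_of_mem _ rfl)))
    by_cases hvF : f 4 ∈ F
    · obtain ⟨C1, hC1, hv1, hc1⟩ :=
        not_not.1 (fun hcont => hvc ((hPf.2.2.2 _ hvF _ hcF).2 hcont))
      obtain ⟨C2, hC2, hv2, hd2⟩ :=
        not_not.1 (fun hcont => hvd ((hPf.2.2.2 _ hvF _ hdF).2 hcont))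
      have h12 : C1 = C2 := hPf.class_unique hC1 hC2 hv1 hv2
      exact hPf.not_adj hC2 (h12 ▸ hc1) hd2 hcd
    · obtain ⟨Ca, hCa, h0Ca⟩ := hPf.exists_class haF
      obtain ⟨Cb, hCb, h1Cb⟩ := hPf.exists_class hbF
      have heq : Ca = Cb :=
        hyp F hCmdF (f 4) hvF Pf hPf Ca hCa Cb hCb ⟨f 0, h0Ca, hva⟩ ⟨f 1, h1Cb, hvb⟩
      exact hPf.not_adj hCb (heq ▸ h0Ca) h1Cb hab

end PrisonFreePaper
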